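/- Under the blow-up change of coordinates p̃ = Φ^s_r(p), no first-order terms are generated: Σ_{i,j} a^{ij}(p) ∂²p̃^r/∂p^i∂p^j = 0, where a^{ij}(p) = p^i(δ^i_j − p^j) with a^{ss} = p^s(1−p^s), a^{rr} = p^r(1−p^r), a^{sr} = a^{rs} = −p^s p^r. -/

import Mathlib

noncomputable def Tm {d : ℕ} (s r : Fin d) (p : Fin d → ℝ) (i j : Fin d) : ℝ :=
  p i * ((if i = j then (1:ℝ) else 0) - p j) *
    (-(if r = j then (1:ℝ) else 0) *
        ((if s = i then (1:ℝ) else 0) + (if r = i then (1:ℝ) else 0)) / (p s + p r)^2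
      - ((if s = j then (1:ℝ) else 0) + (if r = j then (1:ℝ) else 0)) *
        (if r = i then (1:ℝ) else 0) / (p s + p r)^2
      + 2 * ((if s = j then (1:ℝ) else 0) + (if r = j then (1:ℝ) else 0)) * p r *
        ((if s = i then (1:ℝ) else 0) + (if r = i then (1:ℝ) else 0)) / (p s + p r)^3)

open ContinuousLinearMap in
lemma aux1 {d : ℕ} (s r : Fin d) (q : Fin d → ℝ) (hq : q s + q r ≠ 0) (j : Fin d) :
    fderiv ℝ (fun w : Fin d → ℝ => w r / (w s + w r)) q (Pi.single j 1) =
      (if r = j then (1:ℝ) else 0) / (q s + q r)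
        - q r * ((if s = j then (1:ℝ) else 0) + (if r = j then (1:ℝ) else 0))
          / (q s + q r)^2 := by
  have hS : HasFDerivAt (fun w : Fin d → ℝ => w s + w r)
      ((proj s : (Fin d → ℝ) →L[ℝ] ℝ) + proj r) q :=
    ((proj s : (Fin d → ℝ) →L[ℝ] ℝ).hasFDerivAt).add ((proj r : (Fin d → ℝ) →L[ℝ] ℝ).hasFDerivAt)
  have hinv : HasFDerivAt (fun w : Fin d → ℝ => (w s + w r)⁻¹)
      ((-((q s + q r) ^ 2)⁻¹) • ((proj s : (Fin d → ℝ) →L[ℝ] ℝ) + proj r)) q :=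
    (hasDerivAt_inv hq).comp_hasFDerivAt q hS
  have hmul : HasFDerivAt (fun w : Fin d → ℝ => w r * (w s + w r)⁻¹)
      ((q r) • ((-((q s + q r) ^ 2)⁻¹) • ((proj s : (Fin d → ℝ) →L[ℝ] ℝ) + proj r))
        + ((proj r : (Fin d → ℝ) →L[ℝ] ℝ)).smulRight ((q s + q r)⁻¹)) q :=
    ((proj r : (Fin d → ℝ) →L[ℝ] ℝ).hasFDerivAt).mul' hinv
  have hf : HasFDerivAt (fun w : Fin d → ℝ => w r / (w s + w r))
      ((q r) • ((-((q s + q r) ^ 2)⁻¹) • ((proj s : (Fin d → ℝ) →L[ℝ] ℝ) + proj r))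
        + ((proj r : (Fin d → ℝ) →L[ℝ] ℝ)).smulRight ((q s + q r)⁻¹)) q := by
    simpa only [div_eq_mul_inv] using hmul
  rw [hf.fderiv]
  simp [Pi.single_apply, smulRight_apply]
  split_ifs <;> ring

open ContinuousLinearMap in
lemma aux2 {d : ℕ} (s r : Fin d) (c1 c2 : ℝ) (p : Fin d → ℝ) (hp : p s + p r ≠ 0) (i : Fin d) :
    fderiv ℝ (fun q : Fin d → ℝ =>
        c1 / (q s + q r) - q r * c2 / (q s + q r)^2) p (Pi.single i 1) =
      -c1 * ((if s = i then (1:ℝ) else 0) + (if r = i then (1:ℝ) else 0)) / (p s + p r)^2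
      - c2 * (if r = i then (1:ℝ) else 0) / (p s + p r)^2
      + 2 * c2 * p r * ((if s = i then (1:ℝ) else 0) + (if r = i then (1:ℝ) else 0))
        / (p s + p r)^3 := by
  set S' : (Fin d → ℝ) →L[ℝ] ℝ := (proj s : (Fin d → ℝ) →L[ℝ] ℝ) + (proj r : (Fin d → ℝ) →L[ℝ] ℝ) with hS'
  have hS : HasFDerivAt (fun w : Fin d → ℝ => w s + w r) S' p :=
    ((proj s : (Fin d → ℝ) →L[ℝ] ℝ).hasFDerivAt).add ((proj r : (Fin d → ℝ) →L[ℝ] ℝ).hasFDerivAt)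
  have hinv : HasFDerivAt (fun w : Fin d → ℝ => (w s + w r)⁻¹)
      ((-((p s + p r) ^ 2)⁻¹) • S') p := (hasDerivAt_inv hp).comp_hasFDerivAt p hS
  have h1 : HasFDerivAt (fun w : Fin d → ℝ => c1 / (w s + w r))
      (c1 • ((-((p s + p r) ^ 2)⁻¹) • S')) p := by
    simpa only [div_eq_mul_inv] using hinv.const_mul c1
  have hsq : HasFDerivAt (fun w : Fin d → ℝ => (w s + w r)^2)
      ((2 * (p s + p r)) • S') p := by
    have this : HasFDerivAt (fun y : Fin d → ℝ => (y s + y r) * (y s + y r))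
        ((p s + p r) • S' + (p s + p r) • S') p := hS.mul hS
    convert this using 1 <;> [ext w; skip]
    · ring
    · module
  have hinv2 : HasFDerivAt (fun w : Fin d → ℝ => ((w s + w r)^2)⁻¹)
      ((-((((p s + p r))^2) ^ 2)⁻¹) • ((2 * (p s + p r)) • S')) p :=
    (hasDerivAt_inv (pow_ne_zero 2 hp)).comp_hasFDerivAt p hsq
  have hm : HasFDerivAt (fun w : Fin d → ℝ => w r * ((w s + w r)^2)⁻¹)
      ((p r) • ((-((((p s + p r))^2) ^ 2)⁻¹) • ((2 * (p s + p r)) • S'))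
        + ((proj r : (Fin d → ℝ) →L[ℝ] ℝ)).smulRight (((p s + p r)^2)⁻¹)) p :=
    ((proj r : (Fin d → ℝ) →L[ℝ] ℝ).hasFDerivAt).mul' hinv2
  have h2 : HasFDerivAt (fun w : Fin d → ℝ => w r * c2 / (w s + w r)^2)
      (c2 • ((p r) • ((-((((p s + p r))^2) ^ 2)⁻¹) • ((2 * (p s + p r)) • S'))
        + ((proj r : (Fin d → ℝ) →L[ℝ] ℝ)).smulRight (((p s + p r)^2)⁻¹))) p := by
    have this : HasFDerivAt (fun y : Fin d → ℝ => c2 * (y r * ((y s + y r) ^ 2)⁻¹))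
        (c2 • ((p r) • ((-((((p s + p r))^2) ^ 2)⁻¹) • ((2 * (p s + p r)) • S'))
          + ((proj r : (Fin d → ℝ) →L[ℝ] ℝ)).smulRight (((p s + p r)^2)⁻¹))) p :=
      hm.const_mul c2
    convert this using 1
    ext w
    ring
  have hf : HasFDerivAt (fun q : Fin d → ℝ => c1 / (q s + q r) - q r * c2 / (q s + q r)^2) _ p :=
    h1.sub h2
  rw [hf.fderiv]
  simp [hS', Pi.single_apply, smulRight_apply]
  split_ifs <;> field_simp <;> ring

theorem blowup_no_first_order (d : ℕ) (s r : Fin d) (hsr : s ≠ r)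
    (a : (Fin d → ℝ) → Fin d → Fin d → ℝ)
    (ha : ∀ p i j, a p i j = p i * ((if i = j then (1:ℝ) else 0) - p j))
    (p : Fin d → ℝ) (hp : 0 < p s + p r) :
    (∑ i, ∑ j, a p i j *
      fderiv ℝ (fun q : Fin d → ℝ =>
        fderiv ℝ (fun w : Fin d → ℝ => w r / (w s + w r)) q (Pi.single j 1))
        p (Pi.single i 1)) = 0 := by
  classical
  have hp' : p s + p r ≠ 0 := ne_of_gt hp
  have hU : IsOpen {q : Fin d → ℝ | 0 < q s + q r} :=
    isOpen_lt continuous_const ((continuous_apply s).add (continuous_apply r))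
  have hmem : {q : Fin d → ℝ | 0 < q s + q r} ∈ nhds p := hU.mem_nhds hp
  have hfd : ∀ j : Fin d,
      fderiv ℝ (fun q : Fin d → ℝ =>
        fderiv ℝ (fun w : Fin d → ℝ => w r / (w s + w r)) q (Pi.single j 1)) p
      = fderiv ℝ (fun q : Fin d → ℝ => (if r = j then (1:ℝ) else 0) / (q s + q r)
          - q r * ((if s = j then (1:ℝ) else 0) + (if r = j then (1:ℝ) else 0))
            / (q s + q r)^2) p := by
    intro j
    apply Filter.EventuallyEq.fderiv_eq
    filter_upwards [hmem] with q hq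
    exact aux1 s r q (ne_of_gt hq) j
  have hterm : ∀ i j : Fin d, a p i j *
      fderiv ℝ (fun q : Fin d → ℝ =>
        fderiv ℝ (fun w : Fin d → ℝ => w r / (w s + w r)) q (Pi.single j 1))
        p (Pi.single i 1) = Tm s r p i j := by
    intro i j
    rw [ha, hfd j, aux2 s r _ _ p hp' i]
    rfl
  simp only [hterm]
  have e1 : ∀ i : Fin d, (∑ j, Tm s r p i j)
      = ∑ j ∈ ({s, r} : Finset (Fin d)), Tm s r p i j := by
    intro i
    refine (Finset.sum_subset (Finset.subset_univ _) fun j _ hj => ?_).symm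
    simp only [Finset.mem_insert, Finset.mem_singleton, not_or] at hj
    simp [Tm, Ne.symm hj.1, Ne.symm hj.2]
  simp only [e1]
  have e2 : (∑ i, ∑ j ∈ ({s, r} : Finset (Fin d)), Tm s r p i j)
      = ∑ i ∈ ({s, r} : Finset (Fin d)), ∑ j ∈ ({s, r} : Finset (Fin d)), Tm s r p i j := by
    refine (Finset.sum_subset (Finset.subset_univ _) fun i _ hi => ?_).symm
    simp only [Finset.mem_insert, Finset.mem_singleton, not_or] at hi
    simp [Tm, Finset.sum_pair hsr, Ne.symm hi.1, Ne.symm hi.2]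
  rw [e2, Finset.sum_pair hsr, Finset.sum_pair hsr, Finset.sum_pair hsr]
  simp only [Tm, if_pos rfl, if_neg hsr, if_neg (Ne.symm hsr)]
  field_simp
  ring
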